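/- Let E be a finite-dimensional real inner product space, let β ∈ E, and let M be a nonempty finite subset of the half-space {α ∈ E : ⟨α, β⟩ ≥ ‖β‖²}. If β does NOT lie in the convex hull of {α ∈ M : ⟨α, β⟩ = ‖β‖²}, then the unique point β' of the convex hull of M closest to the origin satisfies ‖β'‖ > ‖β‖. -/

import Mathlib

open scoped RealInnerProductSpace

/-- Let E be a finite-dimensional real inner product space, β ∈ E, and M a nonempty finite
subset of the half-space {α : ⟨α, β⟩ ≥ ‖β‖²}. If β does not lie in the convex hull of
{α ∈ M : ⟨α, β⟩ = ‖β‖²}, then the unique point β' of the convex hull of M closest to the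
origin satisfies ‖β'‖ > ‖β‖. -/
theorem stmt_2 {E : Type*} [NormedAddCommGroup E] [InnerProductSpace ℝ E]
    [FiniteDimensional ℝ E] (β : E) (M : Finset E) (hM : M.Nonempty)
    (hhalf : ∀ α ∈ M, ‖β‖ ^ 2 ≤ ⟪α, β⟫)
    (hnot : β ∉ convexHull ℝ {a : E | a ∈ M ∧ ⟪a, β⟫ = ‖β‖ ^ 2})
    (β' : E) (hβ' : β' ∈ convexHull ℝ (M : Set E))
    (hmin : ∀ y ∈ convexHull ℝ (M : Set E), ‖β'‖ ≤ ‖y‖) :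
    ‖β‖ < ‖β'‖ := by
  classical
  -- Step 1: ⟪β', β⟫ ≥ ‖β‖²
  have hlin : IsLinearMap ℝ (fun x : E => ⟪x, β⟫) :=
    ⟨fun x y => inner_add_left _ _ _, fun c x => real_inner_smul_left _ _ _⟩
  have hconv : Convex ℝ {x : E | ‖β‖ ^ 2 ≤ ⟪x, β⟫} := convex_halfSpace_ge hlin _
  have h1 : ‖β‖ ^ 2 ≤ ⟪β', β⟫ :=
    convexHull_min (fun a ha => hhalf a ha) hconv hβ'
  by_cases hβ0 : β = 0
  · -- β = 0 : the equality set is all of M, so β' ≠ 0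
    have hset : {a : E | a ∈ M ∧ ⟪a, β⟫ = ‖β‖ ^ 2} = (M : Set E) := by
      ext a; simp [hβ0]
    rw [hset] at hnot
    have : β' ≠ β := fun h => hnot (h ▸ hβ')
    simpa [hβ0, norm_pos_iff] using fun h : β' = 0 => this (h.trans hβ0.symm)
  · have hβpos : (0 : ℝ) < ‖β‖ := norm_pos_iff.mpr hβ0
    have hCS : ⟪β', β⟫ ≤ ‖β'‖ * ‖β‖ := real_inner_le_norm _ _
    have hge : ‖β‖ ≤ ‖β'‖ := by nlinarith
    rcases lt_or_eq_of_le hge with h | heq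
    · exact h
    · -- equality case: β' = β
      exfalso
      have hinner : ⟪β', β⟫ = ‖β'‖ * ‖β‖ := by nlinarith
      have hβ'β : ‖β‖ • β' = ‖β'‖ • β := (inner_eq_norm_mul_iff_real).mp hinner
      have hββ' : β' = β := by
        have h2 : ‖β‖ • β' = ‖β‖ • β := by rw [hβ'β, ← heq]
        exact smul_right_injective E (ne_of_gt hβpos) h2
      subst hββ'
      rw [Finset.convexHull_eq] at hβ'
      obtain ⟨w, hw0, hw1, hwc⟩ := hβ'
      have hcm : β' = ∑ a ∈ M, w a • a := by
        rw [← hwc, Finset.centerMass_eq_of_sum_1 _ _ hw1]; rfl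
      have hsum : ∑ a ∈ M, w a * ⟪a, β'⟫ = ‖β'‖ ^ 2 := by
        have := real_inner_self_eq_norm_sq β'
        rw [← this]
        conv_lhs => rw [show (fun a => w a * ⟪a, β'⟫) = fun a => ⟪w a • a, β'⟫ from
          funext fun a => (real_inner_smul_left _ _ _).symm]
        rw [← sum_inner, ← hcm]
      have hzero : ∑ a ∈ M, w a * (⟪a, β'⟫ - ‖β'‖ ^ 2) = 0 := by
        have : ∑ a ∈ M, w a * (⟪a, β'⟫ - ‖β'‖ ^ 2)
            = (∑ a ∈ M, w a * ⟪a, β'⟫) - (∑ a ∈ M, w a) * ‖β'‖ ^ 2 := by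
          rw [Finset.sum_mul, ← Finset.sum_sub_distrib]
          exact Finset.sum_congr rfl (fun x _ => by ring)
        rw [this, hsum, hw1]; ring
      have hkey : ∀ a ∈ M, w a = 0 ∨ ⟪a, β'⟫ = ‖β'‖ ^ 2 := by
        intro a ha
        have hterm : ∀ b ∈ M, 0 ≤ w b * (⟪b, β'⟫ - ‖β'‖ ^ 2) := fun b hb =>
          mul_nonneg (hw0 b hb) (sub_nonneg.mpr (hhalf b hb))
        have := (Finset.sum_eq_zero_iff_of_nonneg hterm).mp hzero a ha
        rcases mul_eq_zero.mp this with h | h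
        · exact Or.inl h
        · exact Or.inr (by linarith [sub_eq_zero.mp h])
      set M' := M.filter (fun a => ⟪a, β'⟫ = ‖β'‖ ^ 2) with hM'
      have hwz : ∀ a ∈ M, a ∉ M' → w a = 0 := by
        intro a ha hna
        rcases hkey a ha with h | h
        · exact h
        · exact absurd (Finset.mem_filter.mpr ⟨ha, h⟩) hna
      have hw1' : ∑ a ∈ M', w a = 1 := by
        rw [← hw1]
        exact Finset.sum_subset (Finset.filter_subset _ _) hwz
      have hcm' : M'.centerMass w id = β' := by
        rw [Finset.centerMass_eq_of_sum_1 _ _ hw1', hcm]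
        exact Finset.sum_subset (Finset.filter_subset _ _)
          (fun a ha hna => by rw [hwz a ha hna]; exact zero_smul _ _)
      have hmem : M'.centerMass w id ∈
          convexHull ℝ {a : E | a ∈ M ∧ ⟪a, β'⟫ = ‖β'‖ ^ 2} :=
        Finset.centerMass_mem_convexHull _
          (fun a ha => hw0 a (Finset.filter_subset _ _ ha))
          (by rw [hw1']; norm_num)
          (fun a ha => Finset.mem_filter.mp ha)
      exact hnot (hcm' ▸ hmem)
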